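/- Existence and uniqueness of greatest common divisors: for every k ≥ 1 and every family u : Fin k → S there exists a unique d ∈ S such that d divides u i for every i, and every e ∈ S that divides u i for all i also divides d. -/
import Mathlib


open scoped BigOperators

/-- `u` divides `w` in `S`: `w ∈ u·S`. -/
def SDvd {G : Type*} [Group G] (S : Submonoid G) (u w : G) : Prop := ∃ s ∈ S, w = u * s

/-- The left set `u·S = {u * s : s ∈ S}`. -/
def leftSet {G : Type*} [Group G] (S : Submonoid G) (u : G) : Set G := {w | ∃ s ∈ S, w = u * s}

/-- `τ(u)`: the number of ordered factorizations `u = v * w` with `v, w ∈ S`. -/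
noncomputable def tau {G : Type*} [Group G] (S : Submonoid G) (u : G) : ℕ :=
  Set.ncard {p : G × G | p.1 ∈ S ∧ p.2 ∈ S ∧ p.1 * p.2 = u}

/-- An integral monoid: a submonoid of a group satisfying Axioms I, II, III. -/
structure IntegralMonoid {G : Type*} [Group G] (S : Submonoid G) : Prop where
  ax1 : ∀ u ∈ S, u⁻¹ ∈ S → u = 1
  ax2 : ∀ u : G, ∃ x ∈ S, ∃ y ∈ S, u = x * y⁻¹ ∧
        ∀ z ∈ S, ∀ w ∈ S, u = z * w⁻¹ → ∃ c ∈ S, z = x * c ∧ w = y * c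
  ax3 : ∀ u ∈ S, {p : G × G | p.1 ∈ S ∧ p.2 ∈ S ∧ p.1 * p.2 = u}.Finite

lemma lcm2 {G : Type*} [Group G] (S : Submonoid G) (hS : IntegralMonoid S) {a b : G}
    (ha : a ∈ S) (hb : b ∈ S) :
    ∃ m ∈ S, SDvd S a m ∧ SDvd S b m ∧ ∀ n : G, SDvd S a n → SDvd S b n → SDvd S m n := by
  obtain ⟨x, hx, y, hy, hxy, huniv⟩ := hS.ax2 (a⁻¹ * b)
  refine ⟨a * x, S.mul_mem ha hx, ⟨x, hx, rfl⟩, ⟨y, hy, ?_⟩, ?_⟩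
  · have : b = a * (a⁻¹ * b) := by group
    rw [this, hxy]; group
  · rintro n ⟨z, hz, rfl⟩ ⟨w, hw, hnw⟩
    have h2 : a⁻¹ * b = z * w⁻¹ := by
      have hb' : b = a * z * w⁻¹ := by rw [eq_mul_inv_iff_mul_eq]; exact hnw.symm
      rw [hb']; group
    obtain ⟨c, hc, hzc, hwc⟩ := huniv z hz w hw h2
    exact ⟨c, hc, by rw [hzc]; group⟩

lemma lcm_finset {G : Type*} [Group G] (S : Submonoid G) (hS : IntegralMonoid S)
    (T : Finset G) (hT : ∀ e ∈ T, e ∈ S) :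
    ∃ m ∈ S, (∀ e ∈ T, SDvd S e m) ∧ ∀ n ∈ S, (∀ e ∈ T, SDvd S e n) → SDvd S m n := by
  classical
  induction T using Finset.induction_on with
  | empty => exact ⟨1, S.one_mem, by simp, fun n hn _ => ⟨n, hn, (one_mul n).symm⟩⟩
  | @insert a T' ha ih =>
    obtain ⟨m', hm', hdvd', huniv'⟩ := ih (fun e he => hT e (Finset.mem_insert_of_mem he))
    have haS : a ∈ S := hT a (Finset.mem_insert_self a T')
    obtain ⟨m, hm, hdm1, hdm2, hmin⟩ := lcm2 S hS haS hm'
    refine ⟨m, hm, ?_, ?_⟩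
    · intro e he
      rcases Finset.mem_insert.1 he with rfl | he'
      · exact hdm1
      · obtain ⟨s, hs, rfl⟩ := hdvd' e he'
        obtain ⟨t, ht, rfl⟩ := hdm2
        exact ⟨s * t, S.mul_mem hs ht, by group⟩
    · intro n hn hcom
      exact hmin n (hcom a (Finset.mem_insert_self a T'))
        (huniv' n hn (fun e he => hcom e (Finset.mem_insert_of_mem he)))
theorem gcd_exists_unique {G : Type*} [Group G] (S : Submonoid G)
    (hS : IntegralMonoid S) (k : ℕ) (hk : 1 ≤ k) (u : Fin k → G) (hu : ∀ i, u i ∈ S) :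
    ∃! d : G, d ∈ S ∧ (∀ i, SDvd S d (u i)) ∧
      ∀ e ∈ S, (∀ i, SDvd S e (u i)) → SDvd S e d := by
  classical
  -- antisymmetry of divisibility
  have antisymm : ∀ d ∈ S, ∀ d' ∈ S, SDvd S d d' → SDvd S d' d → d = d' := by
    rintro d hd d' hd' ⟨s, hs, rfl⟩ ⟨t, ht, hdt⟩
    have h1 : s * t = 1 := by
      have : d * (s * t) = d * 1 := by rw [mul_one, ← mul_assoc]; exact hdt.symm
      exact mul_left_cancel this
    have hs1 : s = 1 := hS.ax1 s hs (by rw [inv_eq_of_mul_eq_one_right h1]; exact ht)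
    rw [hs1, mul_one]
  let i0 : Fin k := ⟨0, hk⟩
  let D : Set G := {e | e ∈ S ∧ ∀ i, SDvd S e (u i)}
  have hDfin : D.Finite := by
    apply ((hS.ax3 (u i0) (hu i0)).image Prod.fst).subset
    rintro e ⟨heS, hdvd⟩
    obtain ⟨s, hs, hes⟩ := hdvd i0
    exact ⟨(e, s), ⟨heS, hs, hes.symm⟩, rfl⟩
  obtain ⟨d, hd, hdmul, hdmin⟩ := lcm_finset S hS hDfin.toFinset
    (fun e he => ((hDfin.mem_toFinset).1 he).1)
  refine ⟨d, ⟨hd, ?_, ?_⟩, ?_⟩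
  · intro i
    exact hdmin (u i) (hu i) (fun e he => ((hDfin.mem_toFinset).1 he).2 i)
  · intro e heS hedvd
    exact hdmul e (hDfin.mem_toFinset.2 ⟨heS, hedvd⟩)
  · rintro d' ⟨hd', hdvd', hgr'⟩
    have h1 : SDvd S d d' := hgr' d hd
      (fun i => hdmin (u i) (hu i) (fun e he => ((hDfin.mem_toFinset).1 he).2 i))
    have h2 : SDvd S d' d := hdmul d' (hDfin.mem_toFinset.2 ⟨hd', hdvd'⟩)
    exact (antisymm d hd d' hd' h1 h2).symm
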